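/- Let X be a Hausdorff topological space, let γ : [0,1] → X be an injective path, and let P, Q be any points of range γ. Then γ 0 is not between P and Q within range γ, and γ 1 is not between P and Q within range γ. (Paper's Theorem 1.7: neither end-point of a fundamental line is ever between a pair of points of that line, within that line.) -/

import Mathlib

open Topology


lemma aux_not_between_zero {X : Type*} [TopologicalSpace X] [T2Space X]
    (γ : unitInterval → X) (hc : Continuous γ) (hi : Function.Injective γ)
    (P Q : X) :
    ¬ (∃ δ₁ δ₂ : unitInterval → X,
      Continuous δ₁ ∧ Function.Injective δ₁ ∧
      Continuous δ₂ ∧ Function.Injective δ₂ ∧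
      δ₁ 0 = P ∧ δ₁ 1 = γ 0 ∧ δ₂ 0 = γ 0 ∧ δ₂ 1 = Q ∧
      Set.range δ₁ ⊆ Set.range γ ∧ Set.range δ₂ ⊆ Set.range γ ∧
      Set.range δ₁ ∩ Set.range δ₂ = {γ 0}) := by
  rintro ⟨δ₁, δ₂, c₁, i₁, c₂, i₂, h10, h11, h20, h21, r₁, r₂, hint⟩
  have emb : IsClosedEmbedding γ := hc.isClosedEmbedding hi
  let e : unitInterval ≃ₜ Set.range γ := emb.toIsEmbedding.toHomeomorph
  let f₁ : unitInterval → unitInterval := fun t => e.symm ⟨δ₁ t, r₁ (Set.mem_range_self t)⟩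
  let f₂ : unitInterval → unitInterval := fun t => e.symm ⟨δ₂ t, r₂ (Set.mem_range_self t)⟩
  have he : ∀ x, (e x : X) = γ x := fun x => rfl
  have hf₁ : ∀ t, γ (f₁ t) = δ₁ t := by
    intro t
    have := e.apply_symm_apply ⟨δ₁ t, r₁ (Set.mem_range_self t)⟩
    calc γ (f₁ t) = (e (f₁ t) : X) := (he _).symm
    _ = δ₁ t := by rw [this]
  have hf₂ : ∀ t, γ (f₂ t) = δ₂ t := by
    intro t
    have := e.apply_symm_apply ⟨δ₂ t, r₂ (Set.mem_range_self t)⟩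
    calc γ (f₂ t) = (e (f₂ t) : X) := (he _).symm
    _ = δ₂ t := by rw [this]
  have hcf₁ : Continuous f₁ := e.symm.continuous.comp (c₁.subtype_mk _)
  have hcf₂ : Continuous f₂ := e.symm.continuous.comp (c₂.subtype_mk _)
  have hf₁1 : f₁ 1 = 0 := hi (by rw [hf₁, h11])
  have hf₂0 : f₂ 0 = 0 := hi (by rw [hf₂, h20])
  -- real-valued versions
  set g₁ : unitInterval → ℝ := fun t => (f₁ t : ℝ) with hg₁
  set g₂ : unitInterval → ℝ := fun t => (f₂ t : ℝ) with hg₂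
  have pc₁ : IsPreconnected (Set.range g₁) :=
    (isConnected_range (continuous_subtype_val.comp hcf₁)).isPreconnected
  have pc₂ : IsPreconnected (Set.range g₂) :=
    (isConnected_range (continuous_subtype_val.comp hcf₂)).isPreconnected
  have ha0 : f₁ 0 ≠ 0 := by
    intro h
    have : δ₁ 0 = δ₁ 1 := by rw [← hf₁, ← hf₁, h, hf₁1]
    exact zero_ne_one (i₁ this)
  have hb1 : f₂ 1 ≠ 0 := by
    intro h
    have : δ₂ 1 = δ₂ 0 := by rw [← hf₂, ← hf₂, h, hf₂0]
    exact one_ne_zero (i₂ this)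
  have ha : (0:ℝ) < (f₁ 0 : ℝ) := lt_of_le_of_ne (f₁ 0).2.1 (by
    intro h; exact ha0 (Subtype.ext h.symm))
  have hb : (0:ℝ) < (f₂ 1 : ℝ) := lt_of_le_of_ne (f₂ 1).2.1 (by
    intro h; exact hb1 (Subtype.ext h.symm))
  have sub₁ : Set.Icc (0:ℝ) (f₁ 0 : ℝ) ⊆ Set.range g₁ := by
    apply pc₁.Icc_subset
    · exact ⟨1, by simp [hg₁, hf₁1]⟩
    · exact ⟨0, rfl⟩
  have sub₂ : Set.Icc (0:ℝ) (f₂ 1 : ℝ) ⊆ Set.range g₂ := by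
    apply pc₂.Icc_subset
    · exact ⟨0, by simp [hg₂, hf₂0]⟩
    · exact ⟨1, rfl⟩
  set m : ℝ := min (f₁ 0 : ℝ) (f₂ 1 : ℝ) with hm
  have hmpos : 0 < m := lt_min ha hb
  obtain ⟨s, hs⟩ := sub₁ ⟨le_of_lt hmpos, min_le_left _ _⟩
  obtain ⟨t, ht⟩ := sub₂ ⟨le_of_lt hmpos, min_le_right _ _⟩
  have hst : f₁ s = f₂ t := Subtype.ext (by rw [show ((f₁ s : ℝ)) = m from hs,
    show ((f₂ t : ℝ)) = m from ht])
  have : γ (f₁ s) ∈ Set.range δ₁ ∩ Set.range δ₂ := by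
    constructor
    · exact ⟨s, (hf₁ s).symm⟩
    · exact ⟨t, by rw [← hf₂ t, hst]⟩
  rw [hint] at this
  have h0 : f₁ s = 0 := hi this
  have : m = 0 := by rw [← hs]; simp [hg₁, h0]
  exact absurd this (ne_of_gt hmpos)



/-- `B` is between `A` and `C` within `S` (the paper's Interpretation 1.2): there are
injective paths from `A` to `B` and from `B` to `C`, each with range contained in `S`,
whose ranges intersect exactly in `{B}`. -/
def IsBetweenWithin {X : Type*} [TopologicalSpace X] (S : Set X) (A B C : X) : Prop :=
  ∃ δ₁ δ₂ : unitInterval → X,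
    Continuous δ₁ ∧ Function.Injective δ₁ ∧
    Continuous δ₂ ∧ Function.Injective δ₂ ∧
    δ₁ 0 = A ∧ δ₁ 1 = B ∧ δ₂ 0 = B ∧ δ₂ 1 = C ∧
    Set.range δ₁ ⊆ S ∧ Set.range δ₂ ⊆ S ∧
    Set.range δ₁ ∩ Set.range δ₂ = {B}

/-- Paper's Theorem 1.7: neither end-point of a fundamental line is ever between a
pair of points of that line, within that line. -/
theorem endpoint_not_between {X : Type*} [TopologicalSpace X] [T2Space X]
    (γ : unitInterval → X) (hc : Continuous γ) (hi : Function.Injective γ)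
    (P Q : X) (hP : P ∈ Set.range γ) (hQ : Q ∈ Set.range γ) :
    ¬ IsBetweenWithin (Set.range γ) P (γ 0) Q ∧
    ¬ IsBetweenWithin (Set.range γ) P (γ 1) Q := by
  constructor
  · exact aux_not_between_zero γ hc hi P Q
  · set σ : unitInterval → unitInterval := unitInterval.symm with hσ
    have hσs : Function.Surjective σ := unitInterval.symm_involutive.surjective
    have hσi : Function.Injective σ := unitInterval.symm_involutive.injective
    have hrange : Set.range (γ ∘ σ) = Set.range γ := hσs.range_comp γ
    have h0 : (γ ∘ σ) 0 = γ 1 := by simp [hσ, Function.comp]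
    have := aux_not_between_zero (γ ∘ σ) (hc.comp unitInterval.continuous_symm)
      (hi.comp hσi) P Q
    rw [hrange, h0] at this
    exact this
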